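/- (Kantorovich–Rubinstein duality for asymmetric distances) Let V be a finite set equipped with a possibly asymmetric distance function d : V × V → ℝ≥0 that is definite (d(x,x)=0, d(x,y)>0 for x≠y) and satisfies the triangle inequality. For any two probability measures μ and ν on V, inf over couplings π ∈ Π(μ,ν) of Σ_{x,y ∈ V} d(x,y) π(x,y) equals sup over functions f : V → ℝ that are 1-Lipschitz w.r.t. d of Σ_{x ∈ V} f(x)(ν(x) − μ(x)). -/

import Mathlib

open Finset Metric

set_option maxHeartbeats 1000000

/-- A probability measure on a finite set `V`. -/
def IsProbMeasure {V : Type*} [Fintype V] (μ : V → ℝ) : Prop :=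
  (∀ x, 0 ≤ μ x ∧ μ x ≤ 1) ∧ ∑ x, μ x = 1

/-- A coupling of two probability measures `μ` and `ν` on a finite set `V`. -/
def IsCoupling {V : Type*} [Fintype V] (μ ν : V → ℝ) (π : V → V → ℝ) : Prop :=
  (∀ x y, 0 ≤ π x y ∧ π x y ≤ 1) ∧
    (∀ x, ∑ y, π x y = μ x) ∧ (∀ y, ∑ x, π x y = ν y)

namespace KRAux

variable {V : Type*} [Fintype V]

noncomputable def cost (d π : V → V → ℝ) : ℝ := ∑ x, ∑ y, d x y * π x y

def Feas (μ ν : V → ℝ) (π : V → V → ℝ) : Prop :=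
  (∀ x y, 0 ≤ π x y) ∧ (∀ x, ∑ y, π x y = μ x) ∧ (∀ y, ∑ x, π x y = ν y)

def CSet (d : V → V → ℝ) (μ ν : V → ℝ) : Set ℝ := {s | ∃ π, Feas μ ν π ∧ s = cost d π}

lemma feas_prod {μ ν : V → ℝ} (hμ0 : ∀ x, 0 ≤ μ x) (hν0 : ∀ x, 0 ≤ ν x)
    (hν1 : ∑ x, ν x = 1) (hμ1 : ∑ x, μ x = 1) :
    Feas μ ν (fun x y => μ x * ν y) := by
  refine ⟨fun x y => mul_nonneg (hμ0 x) (hν0 y), fun x => ?_, fun y => ?_⟩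
  · rw [← Finset.mul_sum, hν1, mul_one]
  · rw [← Finset.sum_mul, hμ1, one_mul]

lemma cost_nonneg {d π : V → V → ℝ} (hd : ∀ x y, 0 ≤ d x y) (hπ : ∀ x y, 0 ≤ π x y) :
    0 ≤ cost d π :=
  Finset.sum_nonneg fun x _ => Finset.sum_nonneg fun y _ =>
    mul_nonneg (hd x y) (hπ x y)

lemma cost_le {d π : V → V → ℝ} {μ ν : V → ℝ} {D : ℝ} (hd : ∀ x y, d x y ≤ D)
    (hf : Feas μ ν π) (hμ1 : ∑ x, μ x = 1) : cost d π ≤ D := by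
  have : cost d π ≤ ∑ x, ∑ y, D * π x y := by
    refine Finset.sum_le_sum fun x _ => Finset.sum_le_sum fun y _ => ?_
    exact mul_le_mul_of_nonneg_right (hd x y) (hf.1 x y)
  calc cost d π ≤ ∑ x, ∑ y, D * π x y := this
    _ = D := by
        simp_rw [← Finset.mul_sum, hf.2.1]
        rw [hμ1, mul_one]

lemma cset_nonempty {d : V → V → ℝ} {μ ν : V → ℝ} (hμ0 : ∀ x, 0 ≤ μ x) (hν0 : ∀ x, 0 ≤ ν x)
    (hν1 : ∑ x, ν x = 1) (hμ1 : ∑ x, μ x = 1) : (CSet d μ ν).Nonempty :=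
  ⟨_, ⟨_, feas_prod hμ0 hν0 hν1 hμ1, rfl⟩⟩

lemma cset_bddBelow {d : V → V → ℝ} (hd : ∀ x y, 0 ≤ d x y) (μ ν : V → ℝ) :
    BddBelow (CSet d μ ν) := by
  refine ⟨0, fun s hs => ?_⟩
  obtain ⟨π, hπ, rfl⟩ := hs
  exact cost_nonneg hd hπ.1

lemma csInf_cset_nonneg {d : V → V → ℝ} (hd : ∀ x y, 0 ≤ d x y) {μ ν : V → ℝ}
    (hne : (CSet d μ ν).Nonempty) : 0 ≤ sInf (CSet d μ ν) := by
  refine le_csInf hne fun s hs => ?_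
  obtain ⟨π, hπ, rfl⟩ := hs
  exact cost_nonneg hd hπ.1

/-- Gluing lemma: compose couplings through a strictly positive middle marginal. -/
lemma glue {d : V → V → ℝ} (hd_tri : ∀ x y z, d x y ≤ d x z + d z y)
    (hd_nonneg : ∀ x y, 0 ≤ d x y)
    {μ ρ ν : V → ℝ} (hρ : ∀ y, 0 < ρ y) {π₁ π₂ : V → V → ℝ}
    (h₁ : Feas μ ρ π₁) (h₂ : Feas ρ ν π₂) :
    ∃ π, Feas μ ν π ∧ cost d π ≤ cost d π₁ + cost d π₂ := by
  refine ⟨fun x z => ∑ y, π₁ x y * π₂ y z / ρ y, ⟨?_, ?_, ?_⟩, ?_⟩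
  · intro x z
    exact Finset.sum_nonneg fun y _ =>
      div_nonneg (mul_nonneg (h₁.1 x y) (h₂.1 y z)) (hρ y).le
  · intro x
    rw [Finset.sum_comm]
    have : ∀ y, ∑ z, π₁ x y * π₂ y z / ρ y = π₁ x y := by
      intro y
      rw [show (fun z => π₁ x y * π₂ y z / ρ y) = fun z => π₁ x y / ρ y * π₂ y z by
        funext z; ring]
      rw [← Finset.mul_sum, h₂.2.1, div_mul_eq_mul_div, mul_div_assoc,
        div_self (hρ y).ne', mul_one]
    rw [Finset.sum_congr rfl fun y _ => this y, h₁.2.1]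
  · intro z
    rw [Finset.sum_comm]
    have : ∀ y, ∑ x, π₁ x y * π₂ y z / ρ y = π₂ y z := by
      intro y
      rw [show (fun x => π₁ x y * π₂ y z / ρ y) = fun x => π₁ x y * (π₂ y z / ρ y) by
        funext x; ring]
      rw [← Finset.sum_mul, h₁.2.2, mul_div_assoc', mul_comm, mul_div_assoc,
        div_self (hρ y).ne', mul_one]
    rw [Finset.sum_congr rfl fun y _ => this y, h₂.2.2]
  · have key : ∀ x z, d x z * ∑ y, π₁ x y * π₂ y z / ρ y
        ≤ ∑ y, (d x y + d y z) * (π₁ x y * π₂ y z / ρ y) := by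
      intro x z
      rw [Finset.mul_sum]
      refine Finset.sum_le_sum fun y _ => ?_
      exact mul_le_mul_of_nonneg_right (hd_tri x z y)
        (div_nonneg (mul_nonneg (h₁.1 x y) (h₂.1 y z)) (hρ y).le)
    calc cost d (fun x z => ∑ y, π₁ x y * π₂ y z / ρ y)
        ≤ ∑ x, ∑ z, ∑ y, (d x y + d y z) * (π₁ x y * π₂ y z / ρ y) :=
          Finset.sum_le_sum fun x _ => Finset.sum_le_sum fun z _ => key x z
      _ = (∑ x, ∑ z, ∑ y, d x y * (π₁ x y * π₂ y z / ρ y))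
          + ∑ x, ∑ z, ∑ y, d y z * (π₁ x y * π₂ y z / ρ y) := by
          simp_rw [add_mul, Finset.sum_add_distrib]
      _ = cost d π₁ + cost d π₂ := by
          congr 1
          · rw [show (∑ x, ∑ z, ∑ y, d x y * (π₁ x y * π₂ y z / ρ y))
                = ∑ x, ∑ y, ∑ z, d x y * (π₁ x y * π₂ y z / ρ y) by
              exact Finset.sum_congr rfl fun x _ => Finset.sum_comm]
            refine Finset.sum_congr rfl fun x _ => Finset.sum_congr rfl fun y _ => ?_
            rw [show (fun z => d x y * (π₁ x y * π₂ y z / ρ y))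
                = fun z => d x y * π₁ x y / ρ y * π₂ y z by funext z; ring]
            rw [← Finset.mul_sum, h₂.2.1, div_mul_eq_mul_div, mul_div_assoc,
              div_self (hρ y).ne', mul_one]
          · have inner : ∀ a b : V, ∑ x, d a b * (π₁ x a * π₂ a b / ρ a)
                = d a b * π₂ a b := by
              intro a b
              rw [show (fun x => d a b * (π₁ x a * π₂ a b / ρ a))
                  = fun x => d a b * π₂ a b / ρ a * π₁ x a by funext x; ring]
              rw [← Finset.mul_sum, h₁.2.2, div_mul_eq_mul_div, mul_div_assoc,
                div_self (hρ a).ne', mul_one]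
            rw [Finset.sum_comm]
            rw [show (∑ z, ∑ x, ∑ y, d y z * (π₁ x y * π₂ y z / ρ y))
                = ∑ z, ∑ y, ∑ x, d y z * (π₁ x y * π₂ y z / ρ y) by
              exact Finset.sum_congr rfl fun z _ => Finset.sum_comm]
            rw [cost, Finset.sum_comm]
            exact Finset.sum_congr rfl fun z _ => Finset.sum_congr rfl fun y _ => inner z y

lemma cost_combo (d π₁ π₂ : V → V → ℝ) (a b : ℝ) :
    cost d (fun x y => a * π₁ x y + b * π₂ x y) = a * cost d π₁ + b * cost d π₂ := by
  simp only [cost, Finset.mul_sum]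
  rw [← Finset.sum_add_distrib]
  refine Finset.sum_congr rfl fun x _ => ?_
  rw [← Finset.sum_add_distrib]
  exact Finset.sum_congr rfl fun y _ => by ring

lemma key (d : V → V → ℝ) (hd_nonneg : ∀ x y, 0 ≤ d x y) (hd_refl : ∀ x, d x x = 0)
    (hd_tri : ∀ x y z, d x y ≤ d x z + d z y)
    (μ ν : V → ℝ) (hμ0 : ∀ x, 0 ≤ μ x) (hμ1 : ∑ x, μ x = 1)
    (hν1 : ∑ x, ν x = 1) (hν0 : ∀ x, 0 < ν x) :
    ∃ f : V → ℝ, (∀ x y, f y - f x ≤ d x y) ∧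
      sInf (CSet d μ ν) ≤ ∑ x, f x * (ν x - μ x) := by
  classical
  have hne : Nonempty V := by
    by_contra h
    rw [not_nonempty_iff] at h
    rw [Finset.univ_eq_empty, Finset.sum_empty] at hμ1
    norm_num at hμ1
  set n : ℝ := (Fintype.card V : ℝ) with hn_def
  have hn : 0 < n := by
    simp only [hn_def, Nat.cast_pos, Fintype.card_pos_iff]
    exact hne
  -- bound D on d
  set D : ℝ := 1 + ∑ x, ∑ y, d x y with hD_def
  have hD1 : ∀ x y, d x y ≤ D := by
    intro x y
    have h1 : d x y ≤ ∑ y', d x y' :=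
      Finset.single_le_sum (fun i _ => hd_nonneg x i) (mem_univ y)
    have h2 : ∑ y', d x y' ≤ ∑ x', ∑ y', d x' y' :=
      Finset.single_le_sum (fun i _ => Finset.sum_nonneg fun j _ => hd_nonneg i j) (mem_univ x)
    simp only [hD_def]; linarith
  have hD0 : 0 < D := by
    have : 0 ≤ ∑ x, ∑ y, d x y :=
      Finset.sum_nonneg fun i _ => Finset.sum_nonneg fun j _ => hd_nonneg i j
    simp only [hD_def]; linarith
  -- min of ν
  set m : ℝ := univ.inf' univ_nonempty ν with hm_def
  have hm0 : 0 < m := by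
    rw [hm_def, Finset.lt_inf'_iff]
    exact fun x _ => hν0 x
  have hmν : ∀ x, m ≤ ν x := fun x => Finset.inf'_le _ (mem_univ x)
  set r : ℝ := m / 2 with hr_def
  have hr0 : 0 < r := by positivity
  have hr2 : 0 < r / 2 := by positivity
  -- the target measure
  set tg : (V → ℝ) → V → ℝ := fun w x => ν x + w x - (∑ z, w z) / n with htg_def
  have htsum : ∀ w, ∑ x, tg w x = 1 := by
    intro w
    simp only [htg_def]
    rw [Finset.sum_sub_distrib, Finset.sum_add_distrib, hν1, Finset.sum_const,
      Finset.card_univ, nsmul_eq_mul]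
    rw [show ((Fintype.card V : ℝ)) = n from rfl]
    field_simp
    ring
  have havg : ∀ w : V → ℝ, |(∑ z, w z) / n| ≤ ‖w‖ := by
    intro w
    rw [abs_div, abs_of_pos hn, div_le_iff₀ hn]
    calc |∑ z, w z| ≤ ∑ z, |w z| := Finset.abs_sum_le_sum_abs _ _
      _ ≤ ∑ _z : V, ‖w‖ := Finset.sum_le_sum fun z _ => by
          rw [← Real.norm_eq_abs]; exact norm_le_pi_norm w z
      _ = ‖w‖ * n := by rw [Finset.sum_const, Finset.card_univ, nsmul_eq_mul]; ring
  have htpos : ∀ w : V → ℝ, ‖w‖ < r → ∀ x, 0 ≤ tg w x := by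
    intro w hw x
    have h1 : |w x| ≤ ‖w‖ := by rw [← Real.norm_eq_abs]; exact norm_le_pi_norm w x
    have h2 := havg w
    have h3 := hmν x
    have h4 := abs_le.1 h1
    have h5 := abs_le.1 h2
    simp only [htg_def]
    have : r + r = m := by rw [hr_def]; ring
    linarith [h4.1, h5.2]
  have ht0 : tg 0 = ν := by
    funext x
    simp [htg_def]
  -- the perturbation function
  set H : (V → ℝ) → ℝ := fun w => sInf (CSet d μ (tg w)) with hH_def
  have hbdd : ∀ w, BddBelow (CSet d μ (tg w)) := fun w => cset_bddBelow hd_nonneg _ _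
  have hfeas : ∀ w : V → ℝ, ‖w‖ < r → (CSet d μ (tg w)).Nonempty :=
    fun w hw => cset_nonempty hμ0 (htpos w hw) (htsum w) hμ1
  have hH0 : ∀ w : V → ℝ, ‖w‖ < r → 0 ≤ H w :=
    fun w hw => csInf_cset_nonneg hd_nonneg (hfeas w hw)
  have hHD : ∀ w : V → ℝ, ‖w‖ < r → H w ≤ D := by
    intro w hw
    have hmem : cost d (fun x y => μ x * (tg w) y) ∈ CSet d μ (tg w) :=
      ⟨_, feas_prod hμ0 (htpos w hw) (htsum w) hμ1, rfl⟩
    exact le_trans (csInf_le (hbdd w) hmem)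
      (cost_le hD1 (feas_prod hμ0 (htpos w hw) (htsum w) hμ1) hμ1)
  have happrox : ∀ w : V → ℝ, ‖w‖ < r → ∀ ε : ℝ, 0 < ε →
      ∃ π, Feas μ (tg w) π ∧ cost d π < H w + ε := by
    intro w hw ε hε
    obtain ⟨a, ha, halt⟩ := Real.lt_sInf_add_pos (hfeas w hw) hε
    obtain ⟨π, hπ, rfl⟩ := ha
    exact ⟨π, hπ, halt⟩
  -- convexity of H on ball 0 r
  have htg_combo : ∀ (a b : ℝ) (w₁ w₂ : V → ℝ), a + b = 1 →
      ∀ y, a * tg w₁ y + b * tg w₂ y = tg (a • w₁ + b • w₂) y := by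
    intro a b w₁ w₂ hab y
    simp only [htg_def, Pi.add_apply, Pi.smul_apply, smul_eq_mul]
    rw [Finset.sum_add_distrib, ← Finset.mul_sum, ← Finset.mul_sum]
    field_simp
    linear_combination (ν y * n) * hab
  have hconv : ConvexOn ℝ (ball (0 : V → ℝ) r) H := by
    refine ⟨convex_ball _ _, ?_⟩
    intro w₁ hw₁ w₂ hw₂ a b ha hb hab
    rcases eq_or_lt_of_le ha with rfl | ha'
    · have hb1 : b = 1 := by linarith
      subst hb1; simp
    rcases eq_or_lt_of_le hb with rfl | hb'
    · have ha1 : a = 1 := by linarith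
      subst ha1; simp
    have hw : a • w₁ + b • w₂ ∈ ball (0 : V → ℝ) r :=
      convex_ball (0 : V → ℝ) r hw₁ hw₂ ha hb hab
    rw [mem_ball_zero_iff] at hw₁ hw₂ hw
    refine le_of_forall_pos_le_add fun ε hε => ?_
    obtain ⟨π₁, h₁, hc₁⟩ := happrox w₁ hw₁ ε hε
    obtain ⟨π₂, h₂, hc₂⟩ := happrox w₂ hw₂ ε hε
    have hfeas' : Feas μ (tg (a • w₁ + b • w₂)) (fun x y => a * π₁ x y + b * π₂ x y) := by
      refine ⟨fun x y => add_nonneg (mul_nonneg ha (h₁.1 x y)) (mul_nonneg hb (h₂.1 x y)), fun x => ?_, fun y => ?_⟩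
      · rw [Finset.sum_add_distrib, ← Finset.mul_sum, ← Finset.mul_sum, h₁.2.1, h₂.2.1,
          ← add_mul, hab, one_mul]
      · rw [Finset.sum_add_distrib, ← Finset.mul_sum, ← Finset.mul_sum, h₁.2.2, h₂.2.2]
        exact htg_combo a b w₁ w₂ hab y
    have hmem : cost d (fun x y => a * π₁ x y + b * π₂ x y)
        ∈ CSet d μ (tg (a • w₁ + b • w₂)) := ⟨_, hfeas', rfl⟩
    calc H (a • w₁ + b • w₂) ≤ cost d (fun x y => a * π₁ x y + b * π₂ x y) :=
          csInf_le (hbdd _) hmem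
      _ = a * cost d π₁ + b * cost d π₂ := cost_combo d π₁ π₂ a b
      _ ≤ a * (H w₁ + ε) + b * (H w₂ + ε) := by
          have := mul_le_mul_of_nonneg_left hc₁.le ha
          have := mul_le_mul_of_nonneg_left hc₂.le hb
          linarith
      _ = a * H w₁ + b * H w₂ + ε := by linear_combination ε * hab
  -- H is Lipschitz hence continuous on the half ball
  have habs : ∀ a : V → ℝ, dist a (0 : V → ℝ) < r → |H a| ≤ D := by
    intro a ha
    rw [dist_zero_right] at ha
    exact abs_le.2 ⟨by linarith [hH0 a ha], hHD a ha⟩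
  have hlip := hconv.lipschitzOnWith_of_abs_le hr2 habs
  rw [show r - r / 2 = r / 2 by ring] at hlip
  have hcont : ContinuousOn H (ball (0 : V → ℝ) (r / 2)) := hlip.continuousOn
  -- the open convex epigraph-like set
  set S : Set ((V → ℝ) × ℝ) :=
    {p | p.1 ∈ ball (0 : V → ℝ) (r / 2) ∧ H p.1 < p.2} with hS_def
  have hSopen : IsOpen S := by
    have h2 : ContinuousOn (fun p : (V → ℝ) × ℝ => p.2 - H p.1)
        ((ball (0 : V → ℝ) (r / 2)).prod (Set.univ : Set ℝ)) := by
      refine ContinuousOn.sub continuous_snd.continuousOn ?_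
      exact hcont.comp continuous_fst.continuousOn fun p hp => hp.1
    have h3 := h2.isOpen_inter_preimage (isOpen_ball.prod isOpen_univ) (isOpen_Ioi (a := (0:ℝ)))
    convert h3 using 1
    ext p
    simp only [hS_def, Set.mem_setOf_eq, Set.mem_inter_iff, Set.mem_prod, Set.mem_univ,
      and_true, Set.mem_preimage, Set.mem_Ioi, sub_pos, Set.prod]
  have hSconv : Convex ℝ S := by
    rintro p hp q hq a b ha hb hab
    rcases eq_or_lt_of_le ha with rfl | ha'
    · have hb1 : b = 1 := by linarith
      subst hb1; simpa using hq
    rcases eq_or_lt_of_le hb with rfl | hb'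
    · have ha1 : a = 1 := by linarith
      subst ha1; simpa using hp
    have hsub : ball (0 : V → ℝ) (r / 2) ⊆ ball (0 : V → ℝ) r :=
      ball_subset_ball (by linarith)
    constructor
    · simp only [Prod.fst_add, Prod.smul_fst]
      exact convex_ball (0 : V → ℝ) (r / 2) hp.1 hq.1 ha hb hab
    · simp only [Prod.fst_add, Prod.smul_fst, Prod.snd_add, Prod.smul_snd, smul_eq_mul]
      have h1 := hconv.2 (hsub hp.1) (hsub hq.1) ha hb hab
      have h2 : a * H p.1 + b * H q.1 < a * p.2 + b * q.2 :=
        add_lt_add (mul_lt_mul_of_pos_left hp.2 ha') (mul_lt_mul_of_pos_left hq.2 hb')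
      calc H (a • p.1 + b • q.1) ≤ a * H p.1 + b * H q.1 := by
            simpa [smul_eq_mul] using h1
        _ < a * p.2 + b * q.2 := h2
  have hnotmem : ((0 : V → ℝ), H 0) ∉ S := fun h => lt_irrefl _ h.2
  obtain ⟨ℓ, hℓ⟩ := geometric_hahn_banach_open_point hSconv hSopen hnotmem
  set c : ℝ := ℓ ((0 : V → ℝ), (1 : ℝ)) with hc_def
  have h0ball : (0 : V → ℝ) ∈ ball (0 : V → ℝ) (r / 2) := mem_ball_self hr2
  have hdecomp : ∀ (w : V → ℝ) (t : ℝ), ℓ (w, t) = ℓ (w, 0) + t * c := by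
    intro w t
    have hsplit : ((w, t) : (V → ℝ) × ℝ) = (w, (0 : ℝ)) + t • ((0 : V → ℝ), (1 : ℝ)) := by
      simp [Prod.ext_iff]
    rw [hsplit, map_add, map_smul, smul_eq_mul, hc_def]
  have hc : c < 0 := by
    have h1 : ((0 : V → ℝ), H 0 + 1) ∈ S := ⟨h0ball, by simp⟩
    have h2 := hℓ _ h1
    rw [hdecomp 0 (H 0 + 1), hdecomp 0 (H 0)] at h2
    nlinarith
  have hnegc : 0 < -c := by linarith
  have hsub : ∀ w : V → ℝ, ‖w‖ < r / 2 → ℓ (w, 0) + H w * c ≤ H 0 * c := by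
    intro w hw
    have key : ∀ t, H w < t → ℓ (w, 0) + t * c < H 0 * c := by
      intro t ht
      have hmem : ((w, t) : (V → ℝ) × ℝ) ∈ S := ⟨mem_ball_zero_iff.2 hw, ht⟩
      have h2 := hℓ _ hmem
      rw [hdecomp w t, hdecomp 0 (H 0)] at h2
      have hz : ℓ ((0 : V → ℝ), (0 : ℝ)) = 0 := by
        rw [show ((0 : V → ℝ), (0 : ℝ)) = (0 : (V → ℝ) × ℝ) from rfl, map_zero]
      rw [hz] at h2; linarith
    by_contra hcon
    push_neg at hcon
    set δ : ℝ := ℓ (w, 0) + H w * c - H 0 * c with hδ_def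
    have hδ0 : 0 < δ := by simp only [hδ_def]; linarith
    have hlt : H w < H w + δ / (-c) := by
      have : 0 < δ / (-c) := by positivity
      linarith
    have h3 := key (H w + δ / (-c)) hlt
    have hcalc : (H w + δ / (-c)) * c = H w * c - δ := by
      rw [add_mul, div_neg, neg_mul, div_mul_cancel₀ δ hc.ne]
      ring
    rw [hcalc] at h3
    simp only [hδ_def] at h3
    linarith
  set F : (V → ℝ) → ℝ := fun w => ℓ (w, 0) / (-c) with hF_def
  have hsub' : ∀ w : V → ℝ, ‖w‖ < r / 2 → H 0 + F w ≤ H w := by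
    intro w hw
    have h := hsub w hw
    have h2 : F w ≤ H w - H 0 := by
      rw [hF_def]
      rw [div_le_iff₀ hnegc]
      have : (H w - H 0) * (-c) = H 0 * c - H w * c := by ring
      rw [this]
      linarith
    linarith
  have hFsmul : ∀ (t : ℝ) (w : V → ℝ), F (t • w) = t * F w := by
    intro t w
    simp only [hF_def]
    have hsplit : ((t • w, (0 : ℝ)) : (V → ℝ) × ℝ) = t • (w, (0 : ℝ)) := by
      simp [Prod.ext_iff]
    rw [hsplit, map_smul, smul_eq_mul, mul_div_assoc]
  set f : V → ℝ := fun x => F (fun z => if x = z then 1 else 0) with hf_def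
  have hFsum : ∀ w : V → ℝ, F w = ∑ x, w x * f x := by
    intro w
    simp only [hF_def, hf_def]
    have hsplit : ((w, (0 : ℝ)) : (V → ℝ) × ℝ)
        = ∑ i, w i • (((fun j => if i = j then (1 : ℝ) else 0) : V → ℝ), (0 : ℝ)) := by
      rw [Prod.ext_iff]
      constructor
      · rw [Prod.fst_sum]
        simp only [Prod.smul_fst]
        exact pi_eq_sum_univ w
      · rw [Prod.snd_sum]
        simp
    rw [hsplit, map_sum]
    simp only [map_smul, smul_eq_mul]
    rw [Finset.sum_div]
    exact Finset.sum_congr rfl fun x _ => by ring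
  -- general helpers
  have htgz : ∀ u : V → ℝ, (∑ z, u z = 0) → ∀ ε : ℝ, tg (ε • u) = fun v => ν v + ε * u v := by
    intro u hu ε
    funext v
    simp only [htg_def, Pi.smul_apply, smul_eq_mul]
    rw [← Finset.mul_sum, hu, mul_zero, zero_div, sub_zero]
  have hsmall_gen : ∀ (u : V → ℝ) (s : ℝ), 0 < s → s ≤ r / (2 * (‖u‖ + 1)) →
      ‖s • u‖ < r / 2 := by
    intro u s hs hsle
    rw [norm_smul, Real.norm_eq_abs, abs_of_pos hs]
    have h2 : 0 ≤ ‖u‖ := norm_nonneg u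
    calc s * ‖u‖ ≤ r / (2 * (‖u‖ + 1)) * ‖u‖ := mul_le_mul_of_nonneg_right hsle h2
      _ < r / 2 := by
          rw [div_mul_eq_mul_div, div_lt_div_iff₀ (by positivity) (by norm_num)]
          nlinarith
  have h0r : ‖(0 : V → ℝ)‖ < r := by simpa using hr0
  -- Lipschitz property of f
  have hLip : ∀ x y, f y - f x ≤ d x y := by
    intro x y
    rcases eq_or_ne x y with rfl | hxy
    · simp [hd_refl x]
    set w₀ : V → ℝ := fun z => (if y = z then (1 : ℝ) else 0) - (if x = z then (1 : ℝ) else 0)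
      with hw₀_def
    have hfw₀ : F w₀ = f y - f x := by
      simp only [hF_def, hf_def]
      have hsplit : ((w₀, (0 : ℝ)) : (V → ℝ) × ℝ)
          = (((fun z => if y = z then (1 : ℝ) else 0) : V → ℝ), (0 : ℝ))
            - (((fun z => if x = z then (1 : ℝ) else 0) : V → ℝ), (0 : ℝ)) := by
        rw [Prod.mk_sub_mk, sub_zero]
        congr 1
      rw [hsplit, map_sub, sub_div]
    have hsum₀ : ∑ z, w₀ z = 0 := by
      simp [hw₀_def, Finset.sum_sub_distrib]
    set ε : ℝ := min m (r / (2 * (‖w₀‖ + 1))) with hε_def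
    have hε0 : 0 < ε := lt_min hm0 (by positivity)
    have hεν : ε ≤ ν x := le_trans (min_le_left _ _) (hmν x)
    have hsmall : ‖ε • w₀‖ < r / 2 := hsmall_gen w₀ ε hε0 (min_le_right _ _)
    have hup : H (ε • w₀) ≤ H 0 + ε * d x y := by
      refine le_of_forall_pos_le_add fun δ hδ => ?_
      obtain ⟨π, hπ, hcost⟩ := happrox 0 h0r δ hδ
      rw [ht0] at hπ
      set C : V → ℝ := fun z => ε / ν x * π z x with hC_def
      have hC0 : ∀ z, 0 ≤ C z := fun z =>
        mul_nonneg (div_nonneg hε0.le (hν0 x).le) (hπ.1 z x)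
      have hCsum : ∑ z, C z = ε := by
        simp only [hC_def]
        rw [← Finset.mul_sum, hπ.2.2 x, div_mul_cancel₀ _ (hν0 x).ne']
      set π' : V → V → ℝ := fun z v =>
        π z v + C z * ((if y = v then (1 : ℝ) else 0) - (if x = v then (1 : ℝ) else 0))
        with hπ'_def
      have hfeas' : Feas μ (tg (ε • w₀)) π' := by
        refine ⟨?_, ?_, ?_⟩
        · intro z v
          simp only [hπ'_def]
          rcases eq_or_ne y v with rfl | hyv
          · rw [if_pos rfl, if_neg (fun h : x = y => hxy h)]
            have h1 := hπ.1 z y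
            have h2 := hC0 z
            nlinarith
          · rw [if_neg hyv]
            rcases eq_or_ne x v with rfl | hxv
            · rw [if_pos rfl]
              have h1 : ε / ν x ≤ 1 := (div_le_one (hν0 x)).2 hεν
              have h2 := hπ.1 z x
              simp only [hC_def]
              nlinarith
            · rw [if_neg hxv]
              simpa using hπ.1 z v
        · intro z
          simp only [hπ'_def]
          rw [Finset.sum_add_distrib, ← Finset.mul_sum, hπ.2.1 z]
          rw [Finset.sum_sub_distrib]
          simp
        · intro v
          simp only [hπ'_def]
          rw [Finset.sum_add_distrib, ← Finset.sum_mul, hπ.2.2 v, hCsum,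
            htgz w₀ hsum₀ ε]
      have hinner : ∀ z, ∑ v, d z v *
          (C z * ((if y = v then (1 : ℝ) else 0) - (if x = v then (1 : ℝ) else 0)))
          = C z * (d z y - d z x) := by
        intro z
        rw [show (fun v => d z v * (C z * ((if y = v then (1 : ℝ) else 0)
              - (if x = v then (1 : ℝ) else 0))))
            = fun v => C z * ((if y = v then d z v else 0) - (if x = v then d z v else 0)) by
          funext v
          by_cases h1 : y = v <;> by_cases h2 : x = v <;> simp [h1, h2] <;> ring]
        rw [← Finset.mul_sum, Finset.sum_sub_distrib, Finset.sum_ite_eq, Finset.sum_ite_eq]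
        simp
      have hcost' : cost d π' ≤ cost d π + ε * d x y := by
        have hsplit : cost d π' = cost d π + ∑ z, C z * (d z y - d z x) := by
          simp only [cost, hπ'_def, mul_add, Finset.sum_add_distrib]
          congr 1
          exact Finset.sum_congr rfl fun z _ => hinner z
        rw [hsplit]
        have hb : ∑ z, C z * (d z y - d z x) ≤ ∑ z, C z * d x y := by
          refine Finset.sum_le_sum fun z _ => ?_
          refine mul_le_mul_of_nonneg_left ?_ (hC0 z)
          have := hd_tri z y x
          linarith
        rw [← Finset.sum_mul, hCsum] at hb
        linarith
      have hle : H (ε • w₀) ≤ cost d π' := csInf_le (hbdd _) ⟨π', hfeas', rfl⟩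
      linarith
    have hlow := hsub' (ε • w₀) hsmall
    rw [hFsmul ε w₀] at hlow
    have h1 : ε * F w₀ ≤ ε * d x y := by linarith
    have h2 := le_of_mul_le_mul_left h1 hε0
    rw [hfw₀] at h2
    exact h2
  -- value bound
  have hH0eq : H 0 = sInf (CSet d μ ν) := by
    simp only [hH_def, ht0]
  have hVALUE : H 0 ≤ ∑ x, f x * (ν x - μ x) := by
    set w₁ : V → ℝ := fun z => μ z - ν z with hw₁_def
    have hsum₁ : ∑ z, w₁ z = 0 := by
      simp [hw₁_def, Finset.sum_sub_distrib, hμ1, hν1]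
    set t : ℝ := min 1 (r / (2 * (‖w₁‖ + 1))) with ht_def
    have ht0' : 0 < t := lt_min one_pos (by positivity)
    have ht1 : t ≤ 1 := min_le_left _ _
    have hsmall₁ : ‖t • w₁‖ < r / 2 := hsmall_gen w₁ t ht0' (min_le_right _ _)
    have hdiag : cost d (fun z v => if z = v then μ z else 0) = 0 := by
      simp only [cost]
      have hz : ∀ z, ∑ v, d z v * (if z = v then μ z else 0) = 0 := by
        intro z
        rw [show (fun v => d z v * (if z = v then μ z else 0))
            = fun v => if z = v then d z v * μ z else 0 by
          funext v; by_cases h : z = v <;> simp [h]]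
        rw [Finset.sum_ite_eq]
        simp [hd_refl z]
      rw [Finset.sum_congr rfl fun z _ => hz z]
      simp
    have hup : H (t • w₁) ≤ (1 - t) * H 0 := by
      refine le_of_forall_pos_le_add fun δ hδ => ?_
      obtain ⟨π, hπ, hcost⟩ := happrox 0 h0r δ hδ
      rw [ht0] at hπ
      set π' : V → V → ℝ := fun z v => (1 - t) * π z v + t * (if z = v then μ z else 0)
        with hπ'_def
      have hfeas' : Feas μ (tg (t • w₁)) π' := by
        refine ⟨?_, ?_, ?_⟩
        · intro z v
          refine add_nonneg (mul_nonneg (by linarith) (hπ.1 z v))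
            (mul_nonneg ht0'.le ?_)
          by_cases h : z = v <;> simp [h, hμ0]
        · intro z
          simp only [hπ'_def]
          rw [Finset.sum_add_distrib, ← Finset.mul_sum, ← Finset.mul_sum, hπ.2.1 z,
            Finset.sum_ite_eq]
          simp only [mem_univ, if_true]
          ring
        · intro v
          simp only [hπ'_def]
          rw [Finset.sum_add_distrib, ← Finset.mul_sum, ← Finset.mul_sum, hπ.2.2 v,
            Finset.sum_ite_eq', htgz w₁ hsum₁ t]
          simp only [mem_univ, if_true, hw₁_def]
          ring
      have hcost' : cost d π' = (1 - t) * cost d π := by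
        rw [show cost d π' = cost d (fun z v => (1 - t) * π z v
            + t * (if z = v then μ z else 0)) from rfl,
          cost_combo d π (fun z v => if z = v then μ z else 0) (1 - t) t, hdiag,
          mul_zero, add_zero]
      have hle : H (t • w₁) ≤ cost d π' := csInf_le (hbdd _) ⟨π', hfeas', rfl⟩
      have hH00 := hH0 0 h0r
      have h3 : (1 - t) * cost d π ≤ (1 - t) * (H 0 + δ) :=
        mul_le_mul_of_nonneg_left hcost.le (by linarith)
      have h4 : (1 - t) * (H 0 + δ) ≤ (1 - t) * H 0 + δ := by nlinarith
      linarith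
    have hlow := hsub' (t • w₁) hsmall₁
    rw [hFsmul t w₁] at hlow
    have h2 : F w₁ ≤ -H 0 := by
      have h1 : t * F w₁ ≤ t * (-H 0) := by linarith
      exact le_of_mul_le_mul_left h1 ht0'
    rw [hFsum w₁] at h2
    have h3 : ∑ x, w₁ x * f x = -∑ x, f x * (ν x - μ x) := by
      rw [← Finset.sum_neg_distrib]
      refine Finset.sum_congr rfl fun x _ => ?_
      simp only [hw₁_def]
      ring
    rw [h3] at h2
    linarith
  exact ⟨f, hLip, by rw [← hH0eq]; exact hVALUE⟩


end KRAux

open KRAux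

/-- Kantorovich–Rubinstein duality on a finite set with a possibly
asymmetric, definite distance function satisfying the triangle inequality. -/
theorem kantorovich_rubinstein_duality {V : Type*} [Fintype V]
    (d : V → V → ℝ) (hd_nonneg : ∀ x y, 0 ≤ d x y)
    (hd_refl : ∀ x, d x x = 0)
    (hd_pos : ∀ x y, x ≠ y → 0 < d x y)
    (hd_tri : ∀ x y z, d x y ≤ d x z + d z y)
    (μ ν : V → ℝ) (hμ : IsProbMeasure μ) (hν : IsProbMeasure ν) :
    sInf {s : ℝ | ∃ π : V → V → ℝ, IsCoupling μ ν π ∧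
        s = ∑ x, ∑ y, d x y * π x y} =
      sSup {s : ℝ | ∃ f : V → ℝ, (∀ x y, f y - f x ≤ d x y) ∧
        s = ∑ x, f x * (ν x - μ x)} := by
  classical
  obtain ⟨hμb, hμ1⟩ := hμ
  obtain ⟨hνb, hν1⟩ := hν
  have hμ0 : ∀ x, 0 ≤ μ x := fun x => (hμb x).1
  have hν0 : ∀ x, 0 ≤ ν x := fun x => (hνb x).1
  have hne : Nonempty V := by
    by_contra h
    rw [not_nonempty_iff] at h
    rw [Finset.univ_eq_empty, Finset.sum_empty] at hμ1
    norm_num at hμ1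
  set n : ℝ := (Fintype.card V : ℝ) with hn_def
  have hn : 0 < n := by
    simp only [hn_def, Nat.cast_pos, Fintype.card_pos_iff]
    exact hne
  set D : ℝ := 1 + ∑ x, ∑ y, d x y with hD_def
  have hD1 : ∀ x y, d x y ≤ D := by
    intro x y
    have h1 : d x y ≤ ∑ y', d x y' :=
      Finset.single_le_sum (fun i _ => hd_nonneg x i) (mem_univ y)
    have h2 : ∑ y', d x y' ≤ ∑ x', ∑ y', d x' y' :=
      Finset.single_le_sum (fun i _ => Finset.sum_nonneg fun j _ => hd_nonneg i j) (mem_univ x)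
    simp only [hD_def]; linarith
  have hD0 : 0 < D := by
    have : 0 ≤ ∑ x, ∑ y, d x y :=
      Finset.sum_nonneg fun i _ => Finset.sum_nonneg fun j _ => hd_nonneg i j
    simp only [hD_def]; linarith
  -- the two sets
  have hIC : {s : ℝ | ∃ π : V → V → ℝ, IsCoupling μ ν π ∧
      s = ∑ x, ∑ y, d x y * π x y} = CSet d μ ν := by
    ext s
    constructor
    · rintro ⟨π, hπ, rfl⟩
      exact ⟨π, ⟨fun x y => (hπ.1 x y).1, hπ.2.1, hπ.2.2⟩, rfl⟩
    · rintro ⟨π, hπ, rfl⟩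
      refine ⟨π, ⟨fun x y => ⟨hπ.1 x y, ?_⟩, hπ.2.1, hπ.2.2⟩, rfl⟩
      have h1 : π x y ≤ ∑ y', π x y' :=
        Finset.single_le_sum (fun i _ => hπ.1 x i) (mem_univ y)
      rw [hπ.2.1 x] at h1
      exact h1.trans (hμb x).2
  set Sd : Set ℝ := {s : ℝ | ∃ f : V → ℝ, (∀ x y, f y - f x ≤ d x y) ∧
      s = ∑ x, f x * (ν x - μ x)} with hSd_def
  rw [hIC]
  -- weak duality
  have hweak : ∀ f : V → ℝ, (∀ x y, f y - f x ≤ d x y) → ∀ π : V → V → ℝ, Feas μ ν π →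
      ∑ x, f x * (ν x - μ x) ≤ cost d π := by
    intro f hf π hπ
    have h1 : ∑ x, f x * (ν x - μ x)
        = (∑ x, ∑ z, f x * π z x) - ∑ x, ∑ y, f x * π x y := by
      rw [← Finset.sum_sub_distrib]
      refine Finset.sum_congr rfl fun x _ => ?_
      rw [← hπ.2.2 x, ← hπ.2.1 x, mul_sub, Finset.mul_sum, Finset.mul_sum]
    have h2 : (∑ x, ∑ z, f x * π z x) = ∑ x, ∑ y, f y * π x y := Finset.sum_comm
    rw [h1, h2, ← Finset.sum_sub_distrib]
    have h3 : ∀ x : V, (∑ y, f y * π x y) - ∑ y, f x * π x y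
        = ∑ y, (f y - f x) * π x y := by
      intro x
      rw [← Finset.sum_sub_distrib]
      exact Finset.sum_congr rfl fun y _ => by ring
    rw [Finset.sum_congr rfl fun x _ => h3 x]
    refine Finset.sum_le_sum fun x _ => Finset.sum_le_sum fun y _ => ?_
    exact mul_le_mul_of_nonneg_right (hf x y) (hπ.1 x y)
  -- nonemptiness and bounds
  have hI_ne : (CSet d μ ν).Nonempty := cset_nonempty hμ0 hν0 hν1 hμ1
  have hS_ne : Sd.Nonempty := by
    refine ⟨0, fun _ => 0, fun x y => by simpa using hd_nonneg x y, by simp⟩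
  have hS_bdd : BddAbove Sd := by
    obtain ⟨b, π, hπ, rfl⟩ := hI_ne
    refine ⟨cost d π, fun a ha => ?_⟩
    obtain ⟨f, hf, rfl⟩ := ha
    exact hweak f hf π hπ
  have hI_bdd : BddBelow (CSet d μ ν) := cset_bddBelow hd_nonneg μ ν
  refine le_antisymm ?_ (csSup_le hS_ne fun a ha => le_csInf hI_ne fun b hb => ?_)
  swap
  · obtain ⟨f, hf, rfl⟩ := ha
    obtain ⟨π, hπ, rfl⟩ := hb
    exact hweak f hf π hπ
  -- strong duality via approximation
  refine le_of_forall_pos_le_add fun ε' hε' => ?_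
  set ε : ℝ := min (ε' / (3 * D)) (1 / 2) with hε_def
  have hε0 : 0 < ε := lt_min (by positivity) (by norm_num)
  have hε2 : ε ≤ 1 / 2 := min_le_right _ _
  have hε3 : 3 * D * ε ≤ ε' := by
    have h1 : ε ≤ ε' / (3 * D) := min_le_left _ _
    rw [le_div_iff₀ (by positivity)] at h1
    linarith
  set νε : V → ℝ := fun x => (1 - ε) * ν x + ε * (1 / n) with hνε_def
  have hνε0 : ∀ x, 0 < νε x := by
    intro x
    have h1 : 0 ≤ (1 - ε) * ν x := mul_nonneg (by linarith) (hν0 x)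
    have h2 : 0 < ε * (1 / n) := by positivity
    simp only [hνε_def]; linarith
  have hνε1 : ∑ x, νε x = 1 := by
    simp only [hνε_def]
    rw [Finset.sum_add_distrib, ← Finset.mul_sum, hν1, Finset.sum_const, Finset.card_univ,
      nsmul_eq_mul]
    rw [show ((Fintype.card V : ℝ)) = n from rfl]
    field_simp
    ring
  obtain ⟨f, hfLip, hfval⟩ := key d hd_nonneg hd_refl hd_tri μ νε hμ0 hμ1 hνε1 hνε0
  set x₀ : V := Classical.arbitrary V with hx₀_def
  set g : V → ℝ := fun z => f z - f x₀ with hg_def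
  have hgLip : ∀ x y, g y - g x ≤ d x y := by
    intro x y
    simp only [hg_def]
    have := hfLip x y
    linarith
  have hgbd : ∀ z, |g z| ≤ D := by
    intro z
    rw [abs_le]
    constructor
    · have h1 := hfLip z x₀
      have h2 := hD1 z x₀
      simp only [hg_def]
      linarith
    · have h1 := hfLip x₀ z
      have h2 := hD1 x₀ z
      simp only [hg_def]
      linarith
  have hgval : ∑ x, g x * (νε x - μ x) = ∑ x, f x * (νε x - μ x) := by
    simp only [hg_def, sub_mul]
    rw [Finset.sum_sub_distrib, ← Finset.mul_sum]
    have : ∑ x, (νε x - μ x) = 0 := by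
      rw [Finset.sum_sub_distrib, hνε1, hμ1]; ring
    rw [this, mul_zero, sub_zero]
  -- step 1 : sInf (CSet d μ ν) ≤ sInf (CSet d μ νε) + ε * D  (gluing)
  have hstep1 : sInf (CSet d μ ν) ≤ sInf (CSet d μ νε) + ε * D := by
    rw [← sub_le_iff_le_add]
    refine le_csInf (cset_nonempty hμ0 (fun x => (hνε0 x).le) hνε1 hμ1) fun s hs => ?_
    obtain ⟨π, hπ, rfl⟩ := hs
    set q : V → V → ℝ := fun y z => (1 - ε) * (if y = z then ν z else 0) + (ε * (1 / n)) * ν z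
      with hq_def
    have hqfeas : Feas νε ν q := by
      refine ⟨?_, ?_, ?_⟩
      · intro y z
        refine add_nonneg (mul_nonneg (by linarith) ?_) (mul_nonneg (by positivity) (hν0 z))
        by_cases h : y = z <;> simp [h, hν0]
      · intro y
        simp only [hq_def]
        rw [Finset.sum_add_distrib, ← Finset.mul_sum, ← Finset.mul_sum, Finset.sum_ite_eq, hν1]
        simp only [mem_univ, if_true, hνε_def]
        ring
      · intro z
        simp only [hq_def]
        rw [Finset.sum_add_distrib, ← Finset.mul_sum, Finset.sum_ite_eq', Finset.sum_const,
          Finset.card_univ, nsmul_eq_mul]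
        simp only [mem_univ, if_true]
        rw [show ((Fintype.card V : ℝ)) = n from rfl]
        field_simp
        ring
    have hqcost : cost d q ≤ ε * D := by
      have h1 : cost d (fun y z => if y = z then ν z else 0) = 0 := by
        simp only [cost]
        have hz : ∀ y, ∑ z, d y z * (if y = z then ν z else 0) = 0 := by
          intro y
          rw [show (fun z => d y z * (if y = z then ν z else 0))
              = fun z => if y = z then d y z * ν z else 0 by
            funext z; by_cases h : y = z <;> simp [h]]
          rw [Finset.sum_ite_eq]
          simp [hd_refl y]
        rw [Finset.sum_congr rfl fun y _ => hz y]
        simp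
      have h2 : cost d (fun _ z => ν z) ≤ n * D := by
        have : ∀ y : V, ∑ z, d y z * ν z ≤ D := by
          intro y
          calc ∑ z, d y z * ν z ≤ ∑ z, D * ν z :=
                Finset.sum_le_sum fun z _ => mul_le_mul_of_nonneg_right (hD1 y z) (hν0 z)
            _ = D := by rw [← Finset.mul_sum, hν1, mul_one]
        calc cost d (fun _ z => ν z) ≤ ∑ _y : V, D :=
              Finset.sum_le_sum fun y _ => this y
          _ = n * D := by
              rw [Finset.sum_const, Finset.card_univ, nsmul_eq_mul]
      have h3 : cost d q = (1 - ε) * cost d (fun y z => if y = z then ν z else 0)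
          + (ε * (1 / n)) * cost d (fun _ z => ν z) := by
        rw [show cost d q = cost d (fun y z => (1 - ε) * (if y = z then ν z else 0)
            + (ε * (1 / n)) * ν z) from rfl]
        exact cost_combo d _ _ _ _
      rw [h3, h1, mul_zero, zero_add]
      calc ε * (1 / n) * cost d (fun _ z => ν z) ≤ ε * (1 / n) * (n * D) := by
            refine mul_le_mul_of_nonneg_left h2 (by positivity)
        _ = ε * D := by field_simp
    obtain ⟨πh, hπh, hπhcost⟩ := glue hd_tri hd_nonneg hνε0 hπ hqfeas
    have h4 : sInf (CSet d μ ν) ≤ cost d πh := csInf_le hI_bdd ⟨πh, hπh, rfl⟩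
    linarith
  -- step 3 : comparing the dual values
  have hstep3 : ∑ x, g x * (νε x - μ x) - ∑ x, g x * (ν x - μ x) ≤ 2 * D * ε := by
    have heq : ∑ x, g x * (νε x - μ x) - ∑ x, g x * (ν x - μ x)
        = ε * ∑ x, g x * (1 / n - ν x) := by
      rw [← Finset.sum_sub_distrib, Finset.mul_sum]
      refine Finset.sum_congr rfl fun x _ => ?_
      simp only [hνε_def]
      ring
    rw [heq]
    have habs2 : |∑ x, g x * (1 / n - ν x)| ≤ 2 * D := by
      calc |∑ x, g x * (1 / n - ν x)| ≤ ∑ x, |g x * (1 / n - ν x)| :=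
            Finset.abs_sum_le_sum_abs _ _
        _ ≤ ∑ x, D * (1 / n + ν x) := by
            refine Finset.sum_le_sum fun x _ => ?_
            rw [abs_mul]
            refine mul_le_mul (hgbd x) ?_ (abs_nonneg _) hD0.le
            have h1 : |1 / n - ν x| ≤ |1 / n| + |ν x| := abs_sub _ _
            rw [abs_of_pos (show (0:ℝ) < 1 / n by positivity), abs_of_nonneg (hν0 x)] at h1
            exact h1
        _ = 2 * D := by
            rw [← Finset.mul_sum, Finset.sum_add_distrib, hν1, Finset.sum_const,
              Finset.card_univ, nsmul_eq_mul]
            rw [show ((Fintype.card V : ℝ)) = n from rfl]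
            field_simp
            ring
    have h5 := (abs_le.1 habs2).2
    have h6 : ε * ∑ x, g x * (1 / n - ν x) ≤ ε * (2 * D) :=
      mul_le_mul_of_nonneg_left h5 hε0.le
    linarith
  have hstep4 : ∑ x, g x * (ν x - μ x) ≤ sSup Sd :=
    le_csSup hS_bdd ⟨g, hgLip, rfl⟩
  have hchain : sInf (CSet d μ ν) ≤ sSup Sd + 3 * D * ε := by
    have := hfval
    rw [← hgval] at this
    linarith
  linarith
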